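/- The evidence depends on the data only through the fitted vector: if W₁ and W₂ are two real N×l matrices, each with invertible Gram matrix, such that for the given y ∈ ℝ^N the fitted vectors coincide, W₁(W₁ᵀW₁)⁻¹W₁ᵀ y = W₂(W₂ᵀW₂)⁻¹W₂ᵀ y, then Z₁(y) = Z₂(y), where Z_i(y) = ∫_0^∞ ∫_σ^∞ ∫_{ℝ^l} (1/(σβ)) · (2π)^{−(N+l)/2} · σ^{−N} · √( det(W_iᵀW_i)/(β² − σ²)^l ) · exp( −|y − W_i·a|²/(2σ²) ) · exp( −aᵀ(W_iᵀW_i)a/(2(β² − σ²)) ) da dβ dσ. -/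

import Mathlib

open Matrix MeasureTheory Real

lemma psd_det_nonneg {n : ℕ} {A : Matrix (Fin n) (Fin n) ℝ} (hA : A.PosSemidef) :
    0 ≤ A.det := by
  exact hA.det_nonneg

lemma gauss_std {l : ℕ} (c : ℝ) :
    ∫ v : Fin l → ℝ, Real.exp (-(c * (v ⬝ᵥ v))) = (Real.sqrt (π / c)) ^ l := by
  have h : ∀ v : Fin l → ℝ, Real.exp (-(c * (v ⬝ᵥ v))) = ∏ i, Real.exp (-c * (v i) ^ 2) := by
    intro v
    rw [← Real.exp_sum]
    congr 1
    rw [dotProduct, Finset.mul_sum, neg_eq_iff_eq_neg, ← Finset.sum_neg_distrib]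
    exact Finset.sum_congr rfl fun i _ => by ring
  simp_rw [h]
  rw [MeasureTheory.volume_pi, MeasureTheory.integral_fintype_prod_eq_pow (ι := Fin l) (fun x : ℝ => Real.exp (-c * x ^ 2)),
    integral_gaussian, Fintype.card_fin]

open scoped MatrixOrder in
lemma gauss_quad {l : ℕ} {G : Matrix (Fin l) (Fin l) ℝ} (hG : G.PosSemidef)
    (hd : G.det ≠ 0) (c : ℝ) :
    ∫ a : Fin l → ℝ, Real.exp (-(c * (a ⬝ᵥ G.mulVec a)))
      = (Real.sqrt G.det)⁻¹ * (Real.sqrt (π / c)) ^ l := by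
  set S := CFC.sqrt G with hSdef
  have hSS : S * S = G := CFC.sqrt_mul_sqrt_self G hG.nonneg
  have hSsym : Sᵀ = S := by
    rw [← Matrix.conjTranspose_eq_transpose_of_trivial]
    exact (CFC.sqrt_nonneg G).posSemidef.1
  have hSdnn : 0 ≤ S.det := psd_det_nonneg (CFC.sqrt_nonneg G).posSemidef
  have hSG : S.det * S.det = G.det := by rw [← Matrix.det_mul, hSS]
  have hSd : S.det ≠ 0 := fun h => hd (by rw [← hSG, h, zero_mul])
  have hsqrt : Real.sqrt G.det = S.det := by
    rw [← hSG, Real.sqrt_mul_self hSdnn]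
  have hq : ∀ a, a ⬝ᵥ G.mulVec a = (S.mulVec a) ⬝ᵥ (S.mulVec a) := by
    intro a
    rw [← hSS, ← Matrix.mulVec_mulVec, Matrix.dotProduct_mulVec,
      ← Matrix.mulVec_transpose, hSsym]
  have hlin : LinearMap.det (Matrix.toLin' S) ≠ 0 := by
    rwa [LinearMap.det_toLin']
  have hmap : Measure.map (Matrix.toLin' S) volume
      = ENNReal.ofReal |(LinearMap.det (Matrix.toLin' S))⁻¹| • volume :=
    Real.map_linearMap_volume_pi_eq_smul_volume_pi hlin
  have hcont : Continuous fun v : Fin l → ℝ => Real.exp (-(c * (v ⬝ᵥ v))) := by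
    apply Real.continuous_exp.comp
    apply Continuous.neg
    apply continuous_const.mul
    unfold dotProduct
    exact continuous_finset_sum _ fun i _ => (continuous_apply i).mul (continuous_apply i)
  calc ∫ a : Fin l → ℝ, Real.exp (-(c * (a ⬝ᵥ G.mulVec a)))
      = ∫ a : Fin l → ℝ, Real.exp (-(c * ((Matrix.toLin' S) a ⬝ᵥ (Matrix.toLin' S) a))) := by
        simp_rw [hq, Matrix.toLin'_apply]
    _ = ∫ v : Fin l → ℝ, Real.exp (-(c * (v ⬝ᵥ v)))
          ∂(Measure.map (Matrix.toLin' S) volume) := by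
        rw [MeasureTheory.integral_map ((Matrix.toLin' S).continuous_of_finiteDimensional).aemeasurable
          hcont.aestronglyMeasurable]
    _ = (Real.sqrt G.det)⁻¹ * (Real.sqrt (π / c)) ^ l := by
        rw [hmap, MeasureTheory.integral_smul_measure, ENNReal.toReal_ofReal (abs_nonneg _),
          LinearMap.det_toLin', abs_of_nonneg (inv_nonneg.mpr hSdnn), gauss_std c, hsqrt, smul_eq_mul]

lemma inner_gauss {N l : ℕ} (W : Matrix (Fin N) (Fin l) ℝ)
    (hW : IsUnit (Wᵀ * W).det) (y : Fin N → ℝ) {s t : ℝ} (hs : 0 < s) (ht : 0 < t) :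
    (∫ a : Fin l → ℝ,
      Real.exp (-((y - W.mulVec a) ⬝ᵥ (y - W.mulVec a)) / (2 * s)) *
      Real.exp (-(a ⬝ᵥ (Wᵀ * W).mulVec a) / (2 * t)))
    = (Real.sqrt (Wᵀ * W).det)⁻¹ * (Real.sqrt (π / ((1/s + 1/t)/2))) ^ l *
      Real.exp (-(y ⬝ᵥ y - (t/(s+t)) *
        (y ⬝ᵥ W.mulVec ((Wᵀ * W)⁻¹.mulVec (Wᵀ.mulVec y)))) / (2 * s)) := by
  have hG : (Wᵀ * W).PosSemidef := by
    have h := Matrix.posSemidef_conjTranspose_mul_self W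
    rwa [Matrix.conjTranspose_eq_transpose_of_trivial] at h
  have hd : (Wᵀ * W).det ≠ 0 := hW.ne_zero
  set G := Wᵀ * W with hGdef
  set u := Wᵀ.mulVec y with hudef
  set w := G⁻¹.mulVec u with hwdef
  set c : ℝ := 1/s + 1/t with hc
  have hcpos : 0 < c := by rw [hc]; positivity
  have hstpos : 0 < s + t := by positivity
  set a₀ : Fin l → ℝ := (1/(c*s)) • w with ha₀
  set R : ℝ := u ⬝ᵥ w with hR
  have hGsym : Gᵀ = G := by rw [hGdef, Matrix.transpose_mul, Matrix.transpose_transpose]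
  have hGw : G.mulVec w = u := by
    rw [hwdef, Matrix.mulVec_mulVec, Matrix.mul_nonsing_inv _ hW, Matrix.one_mulVec]
  have hGa₀ : G.mulVec a₀ = (1/(c*s)) • u := by
    rw [ha₀, Matrix.mulVec_smul, hGw]
  have hyhat : y ⬝ᵥ W.mulVec w = R := by
    rw [hR, Matrix.dotProduct_mulVec, ← Matrix.mulVec_transpose]
  have hWaWa : ∀ a : Fin l → ℝ, (W.mulVec a) ⬝ᵥ (W.mulVec a) = a ⬝ᵥ G.mulVec a := by
    intro a
    rw [hGdef, ← Matrix.mulVec_mulVec, Matrix.dotProduct_mulVec a, Matrix.vecMul_transpose]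
  have hyWa : ∀ a : Fin l → ℝ, y ⬝ᵥ (W.mulVec a) = u ⬝ᵥ a := by
    intro a
    rw [Matrix.dotProduct_mulVec, ← Matrix.mulVec_transpose]
  have e1 : ∀ a : Fin l → ℝ, (y - W.mulVec a) ⬝ᵥ (y - W.mulVec a)
      = y ⬝ᵥ y - 2*(u ⬝ᵥ a) + a ⬝ᵥ G.mulVec a := by
    intro a
    rw [sub_dotProduct, dotProduct_sub, dotProduct_sub,
      hWaWa a, hyWa a, dotProduct_comm (W.mulVec a) y, hyWa a]
    ring
  have e2 : ∀ a : Fin l → ℝ, (a - a₀) ⬝ᵥ G.mulVec (a - a₀)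
      = a ⬝ᵥ G.mulVec a - (2/(c*s))*(u ⬝ᵥ a) + (1/(c*s))^2 * R := by
    intro a
    have h1 : a ⬝ᵥ G.mulVec a₀ = (1/(c*s)) * (u ⬝ᵥ a) := by
      rw [hGa₀, dotProduct_smul, smul_eq_mul, dotProduct_comm]
    have h2 : a₀ ⬝ᵥ G.mulVec a = (1/(c*s)) * (u ⬝ᵥ a) := by
      rw [Matrix.dotProduct_mulVec, ← Matrix.mulVec_transpose, hGsym, hGa₀,
        smul_dotProduct, smul_eq_mul]
    have h3 : a₀ ⬝ᵥ G.mulVec a₀ = (1/(c*s))^2 * R := by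
      rw [hGa₀, dotProduct_smul, smul_eq_mul, ha₀, smul_dotProduct,
        smul_eq_mul, dotProduct_comm w u, ← hR]
      ring
    rw [sub_dotProduct, Matrix.mulVec_sub, dotProduct_sub,
      dotProduct_sub, h1, h2, h3]
    ring
  have key : ∀ a : Fin l → ℝ,
      Real.exp (-((y - W.mulVec a) ⬝ᵥ (y - W.mulVec a)) / (2 * s)) *
        Real.exp (-(a ⬝ᵥ G.mulVec a) / (2 * t))
      = Real.exp (-(c/2 * ((a - a₀) ⬝ᵥ G.mulVec (a - a₀)))) *
        Real.exp (-(y ⬝ᵥ y - (t/(s+t)) * R) / (2 * s)) := by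
    intro a
    rw [← Real.exp_add, ← Real.exp_add]
    congr 1
    rw [e1 a, e2 a, hc]
    field_simp
    ring
  simp_rw [key, hyhat]
  rw [MeasureTheory.integral_mul_const]
  simp_rw [sub_eq_add_neg]
  rw [MeasureTheory.integral_add_right_eq_self
    (fun v => Real.exp (-(c/2 * (v ⬝ᵥ G.mulVec v)))) (-a₀)]
  rw [gauss_quad hG hd (c/2)]


/-- The evidence `Z(y)` as a triple integral. -/
noncomputable def evidence (N l : ℕ) (W : Matrix (Fin N) (Fin l) ℝ)
    (y : Fin N → ℝ) : ℝ :=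
  ∫ σ in Set.Ioi (0 : ℝ), ∫ β in Set.Ioi σ, ∫ a : Fin l → ℝ,
    (σ * β)⁻¹ * (2 * π) ^ (-(((N : ℝ) + (l : ℝ)) / 2)) * (σ ^ N)⁻¹ *
      Real.sqrt ((Wᵀ * W).det / (β ^ 2 - σ ^ 2) ^ l) *
      Real.exp (-((y - W.mulVec a) ⬝ᵥ (y - W.mulVec a)) / (2 * σ ^ 2)) *
      Real.exp (-(a ⬝ᵥ (Wᵀ * W).mulVec a) / (2 * (β ^ 2 - σ ^ 2)))

/-- the evidence depends on the data only through the fitted vector. -/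
theorem evidence_depends_only_on_fitted_vector
    (N l : ℕ) (hN : 0 < N) (hl : 0 < l) (hlN : l < N)
    (W₁ W₂ : Matrix (Fin N) (Fin l) ℝ)
    (hW₁ : IsUnit (W₁ᵀ * W₁).det) (hW₂ : IsUnit (W₂ᵀ * W₂).det)
    (y : Fin N → ℝ)
    (hfit : W₁.mulVec ((W₁ᵀ * W₁)⁻¹.mulVec (W₁ᵀ.mulVec y)) =
            W₂.mulVec ((W₂ᵀ * W₂)⁻¹.mulVec (W₂ᵀ.mulVec y))) :
    evidence N l W₁ y = evidence N l W₂ y := by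
  have hpsd : ∀ W : Matrix (Fin N) (Fin l) ℝ, (Wᵀ * W).PosSemidef := by
    intro W
    have h := Matrix.posSemidef_conjTranspose_mul_self W
    rwa [Matrix.conjTranspose_eq_transpose_of_trivial] at h
  have hd₁ : 0 < (W₁ᵀ * W₁).det :=
    lt_of_le_of_ne (psd_det_nonneg (hpsd W₁)) (Ne.symm hW₁.ne_zero)
  have hd₂ : 0 < (W₂ᵀ * W₂).det :=
    lt_of_le_of_ne (psd_det_nonneg (hpsd W₂)) (Ne.symm hW₂.ne_zero)
  unfold evidence
  apply MeasureTheory.setIntegral_congr_fun measurableSet_Ioi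
  intro σ hσ
  apply MeasureTheory.setIntegral_congr_fun measurableSet_Ioi
  intro β hβ
  simp only [Set.mem_Ioi] at hσ hβ
  have hσ0 : 0 < σ := hσ
  have hs : 0 < σ ^ 2 := by positivity
  have ht : 0 < β ^ 2 - σ ^ 2 := by nlinarith
  have hT : 0 < (β ^ 2 - σ ^ 2) ^ l := by positivity
  have pull : ∀ W : Matrix (Fin N) (Fin l) ℝ,
      (∫ a : Fin l → ℝ,
        (σ * β)⁻¹ * (2 * π) ^ (-(((N : ℝ) + (l : ℝ)) / 2)) * (σ ^ N)⁻¹ *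
          Real.sqrt ((Wᵀ * W).det / (β ^ 2 - σ ^ 2) ^ l) *
          Real.exp (-((y - W.mulVec a) ⬝ᵥ (y - W.mulVec a)) / (2 * σ ^ 2)) *
          Real.exp (-(a ⬝ᵥ (Wᵀ * W).mulVec a) / (2 * (β ^ 2 - σ ^ 2))))
      = ((σ * β)⁻¹ * (2 * π) ^ (-(((N : ℝ) + (l : ℝ)) / 2)) * (σ ^ N)⁻¹ *
          Real.sqrt ((Wᵀ * W).det / (β ^ 2 - σ ^ 2) ^ l)) *
        ∫ a : Fin l → ℝ,
          Real.exp (-((y - W.mulVec a) ⬝ᵥ (y - W.mulVec a)) / (2 * σ ^ 2)) *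
          Real.exp (-(a ⬝ᵥ (Wᵀ * W).mulVec a) / (2 * (β ^ 2 - σ ^ 2))) := by
    intro W
    rw [← MeasureTheory.integral_const_mul]
    congr 1
    funext a
    ring
  dsimp only
  rw [pull W₁, pull W₂, inner_gauss W₁ hW₁ y hs ht, inner_gauss W₂ hW₂ y hs ht]
  have hcancel : ∀ d : ℝ, 0 < d →
      Real.sqrt (d / (β ^ 2 - σ ^ 2) ^ l) * (Real.sqrt d)⁻¹
        = (Real.sqrt ((β ^ 2 - σ ^ 2) ^ l))⁻¹ := by
    intro d hd
    rw [Real.sqrt_div hd.le]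
    have hsd : Real.sqrt d ≠ 0 := by positivity
    field_simp
  have hyy : y ⬝ᵥ W₁.mulVec ((W₁ᵀ * W₁)⁻¹.mulVec (W₁ᵀ.mulVec y))
      = y ⬝ᵥ W₂.mulVec ((W₂ᵀ * W₂)⁻¹.mulVec (W₂ᵀ.mulVec y)) := by rw [hfit]
  rw [hyy]
  set A : ℝ := (σ * β)⁻¹ * (2 * π) ^ (-(((N : ℝ) + (l : ℝ)) / 2)) * (σ ^ N)⁻¹ with hA
  set P : ℝ := (Real.sqrt (π / ((1/(σ^2) + 1/(β^2 - σ^2))/2))) ^ l with hP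
  set E : ℝ := Real.exp (-(y ⬝ᵥ y - ((β^2 - σ^2)/(σ^2 + (β^2 - σ^2))) *
        (y ⬝ᵥ W₂.mulVec ((W₂ᵀ * W₂)⁻¹.mulVec (W₂ᵀ.mulVec y)))) / (2 * σ ^ 2)) with hE
  calc A * Real.sqrt ((W₁ᵀ * W₁).det / (β ^ 2 - σ ^ 2) ^ l) *
        ((Real.sqrt (W₁ᵀ * W₁).det)⁻¹ * P * E)
      = A * ((Real.sqrt ((W₁ᵀ * W₁).det / (β ^ 2 - σ ^ 2) ^ l) *
          (Real.sqrt (W₁ᵀ * W₁).det)⁻¹) * P * E) := by ring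
    _ = A * ((Real.sqrt ((β ^ 2 - σ ^ 2) ^ l))⁻¹ * P * E) := by
        rw [hcancel _ hd₁]
    _ = A * ((Real.sqrt ((W₂ᵀ * W₂).det / (β ^ 2 - σ ^ 2) ^ l) *
          (Real.sqrt (W₂ᵀ * W₂).det)⁻¹) * P * E) := by
        rw [hcancel _ hd₂]
    _ = A * Real.sqrt ((W₂ᵀ * W₂).det / (β ^ 2 - σ ^ 2) ^ l) *
        ((Real.sqrt (W₂ᵀ * W₂).det)⁻¹ * P * E) := by ring
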